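/- A finite 2-group G is the group of units of some ring of odd characteristic if and only if G is isomorphic to C_8^t × ∏_{i=1}^k C_{2^{n_i}}^{s_i}, where t and the s_i are nonnegative integers and 2^{n_i} + 1 is a Fermat prime for every i. -/

import Mathlib

open Finset

abbrev M8 := Multiplicative (ZMod 8)
abbrev MM (n : ℕ) := Multiplicative (ZMod n)

/-- target group shape -/
abbrev TargetG (t k : ℕ) (nn s : Fin k → ℕ) : Type :=
  (Fin t → Multiplicative (ZMod 8)) ×
    ((i : Fin k) → Fin (s i) → Multiplicative (ZMod (2 ^ nn i)))

def Good (H : Type*) [Group H] : Prop :=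
  ∃ (t k : ℕ) (nn s : Fin k → ℕ), (∀ i, 0 < nn i ∧ (2 ^ nn i + 1).Prime) ∧
    Nonempty (H ≃* TargetG t k nn s)

section glue

variable {ι ι' : Type*}

def mulPiCongrLeft' (M : ι → Type*) [∀ i, Mul (M i)] (e : ι ≃ ι') :
    (∀ i, M i) ≃* ∀ i', M (e.symm i') :=
  { Equiv.piCongrLeft' M e with map_mul' := fun _ _ => rfl }

def mulSumPiEquivProdPi (M : ι ⊕ ι' → Type*) [∀ i, Mul (M i)] :
    (∀ i, M i) ≃* (∀ i, M (.inl i)) × (∀ i', M (.inr i')) :=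
  { Equiv.sumPiEquivProdPi M with map_mul' := fun _ _ => rfl }

def castPiZMod {a b c d : ℕ} (h1 : a = b) (h2 : c = d) :
    (Fin a → Multiplicative (ZMod c)) ≃* (Fin b → Multiplicative (ZMod d)) := by
  subst h1; subst h2; exact MulEquiv.refl _

end glue

theorem Good.of_mulEquiv {H₁ H₂ : Type*} [Group H₁] [Group H₂] (e : H₁ ≃* H₂) (h : Good H₂) :
    Good H₁ := by
  obtain ⟨t, k, nn, s, hc, ⟨f⟩⟩ := h
  exact ⟨t, k, nn, s, hc, ⟨e.trans f⟩⟩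

theorem Good.prod {H₁ H₂ : Type*} [Group H₁] [Group H₂] (h₁ : Good H₁) (h₂ : Good H₂) :
    Good (H₁ × H₂) := by
  obtain ⟨t₁, k₁, nn₁, s₁, hc₁, ⟨f₁⟩⟩ := h₁
  obtain ⟨t₂, k₂, nn₂, s₂, hc₂, ⟨f₂⟩⟩ := h₂
  refine ⟨t₁ + t₂, k₁ + k₂, Sum.elim nn₁ nn₂ ∘ finSumFinEquiv.symm,
    Sum.elim s₁ s₂ ∘ finSumFinEquiv.symm, ?_, ?_⟩
  · intro i
    rcases h : finSumFinEquiv.symm i with j | j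
    · simpa [h] using hc₁ j
    · simpa [h] using hc₂ j
  · set nn := Sum.elim nn₁ nn₂ ∘ finSumFinEquiv.symm
    set s := Sum.elim s₁ s₂ ∘ finSumFinEquiv.symm
    -- the `Fin t` part
    have e1 : (Fin (t₁ + t₂) → Multiplicative (ZMod 8)) ≃*
        (Fin t₁ → Multiplicative (ZMod 8)) × (Fin t₂ → Multiplicative (ZMod 8)) :=
      (mulPiCongrLeft' _ finSumFinEquiv.symm).trans
        (mulSumPiEquivProdPi fun _ => Multiplicative (ZMod 8))
    have e2 : ((i : Fin (k₁ + k₂)) → Fin (s i) → Multiplicative (ZMod (2 ^ nn i))) ≃*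
        ((i : Fin k₁) → Fin (s₁ i) → Multiplicative (ZMod (2 ^ nn₁ i))) ×
        ((i : Fin k₂) → Fin (s₂ i) → Multiplicative (ZMod (2 ^ nn₂ i))) := by
      refine ((mulPiCongrLeft' _ finSumFinEquiv.symm).trans
        (mulSumPiEquivProdPi _)).trans (MulEquiv.prodCongr ?_ ?_)
      · exact MulEquiv.piCongrRight fun j => castPiZMod (by simp [s]) (by simp [nn])
      · exact MulEquiv.piCongrRight fun j => castPiZMod (by simp [s]) (by simp [nn])
    exact ⟨((f₁.prodCongr f₂).trans (MulEquiv.prodProdProdComm _ _ _ _)).trans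
      (MulEquiv.prodCongr e1.symm e2.symm)⟩
theorem odd_prime_pow_eq_two_pow_add_one {p r m : ℕ} (hp : p.Prime) (hodd : Odd p)
    (hr : 1 ≤ r) (h : p ^ r = 2 ^ m + 1) : (r = 1 ∧ 1 ≤ m) ∨ (p = 3 ∧ r = 2 ∧ m = 3) := by
  have hp2 : p ≠ 2 := by
    intro hh; rw [hh] at hodd; exact (by decide : ¬ Odd 2) hodd
  have hp3 : 3 ≤ p := by have := hp.two_le; omega
  have hm1 : 1 ≤ m := by
    by_contra hm
    have hm0 : m = 0 := by omega
    subst hm0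
    have : 3 ≤ p ^ r := le_trans hp3 (Nat.le_self_pow (by omega) p)
    omega
  rcases Nat.even_or_odd r with he | ho
  · -- r even
    obtain ⟨r', hr'⟩ := he
    have hr'1 : 1 ≤ r' := by omega
    set x := p ^ r' with hx
    have hx3 : 3 ≤ x := le_trans hp3 (Nat.le_self_pow (by omega) p)
    have hxodd : Odd x := hodd.pow
    have hxx : x * x = 2 ^ m + 1 := by
      rw [hx, ← pow_add, ← hr']; exact h
    set y := x - 1 with hy
    have hxy : x = y + 1 := by omega
    have hy2 : 2 ≤ y := by omega
    have hfac : y * (y + 2) = 2 ^ m := by nlinarith [hxx, hxy]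
    have hydvd : y ∣ 2 ^ m := ⟨y + 2, hfac.symm⟩
    have hy2dvd : y + 2 ∣ 2 ^ m := Dvd.intro_left y hfac
    obtain ⟨i, hi, hyi⟩ := (Nat.dvd_prime_pow Nat.prime_two).mp hydvd
    obtain ⟨j, hj, hyj⟩ := (Nat.dvd_prime_pow Nat.prime_two).mp hy2dvd
    have hi1 : 1 ≤ i := by
      by_contra hi0
      have : i = 0 := by omega
      simp [this] at hyi; omega
    have hieq : i = 1 := by
      by_contra hi2
      have h2i : 2 ≤ i := by omega
      have h2j : 2 ≤ j := by
        by_contra hj2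
        interval_cases j <;> omega
      obtain ⟨i'', hi''⟩ : ∃ i'', i = i'' + 2 := ⟨i - 2, by omega⟩
      obtain ⟨j'', hj''⟩ : ∃ j'', j = j'' + 2 := ⟨j - 2, by omega⟩
      rw [hi''] at hyi; rw [hj''] at hyj
      have h4 : 4 * 2 ^ j'' = 4 * 2 ^ i'' + 2 := by
        have e1 : 2 ^ (j'' + 2) = 4 * 2 ^ j'' := by ring
        have e2 : 2 ^ (i'' + 2) = 4 * 2 ^ i'' := by ring
        omega
      omega
    have hyval : y = 2 := by rw [hyi, hieq, pow_one]
    have hx3' : x = 3 := by omega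
    have hpr3 : p ^ r' = 3 := hx3'
    have hp3' : p = 3 := by
      have : p ∣ 3 := hpr3 ▸ dvd_pow_self p (by omega)
      exact (Nat.prime_dvd_prime_iff_eq hp Nat.prime_three).mp this
    have hr'' : r' = 1 := by
      rw [hp3'] at hpr3
      exact Nat.pow_right_injective (by norm_num) (hpr3.trans (pow_one 3).symm)
    have hm3 : m = 3 := by
      have h8 : 2 ^ m = 2 ^ 3 := by rw [← hfac, hyval]; norm_num
      exact Nat.pow_right_injective (le_refl 2) h8
    exact Or.inr ⟨hp3', by omega, hm3⟩
  · -- r odd : show r = 1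
    left
    refine ⟨?_, hm1⟩
    by_contra hr2
    have hr2' : 2 ≤ r := by omega
    have hgeom : (∑ i ∈ range r, (p:ℤ) ^ i) * ((p:ℤ) - 1) = (p:ℤ) ^ r - 1 := geom_sum_mul _ r
    have hqr : (p:ℤ) ^ r - 1 = 2 ^ m := by
      have : (p:ℤ) ^ r = 2 ^ m + 1 := by exact_mod_cast h
      rw [this]; ring
    have hdvd : (∑ i ∈ range r, (p:ℤ) ^ i) ∣ (2 : ℤ) ^ m :=
      ⟨(p:ℤ) - 1, (hgeom.trans hqr).symm⟩
    have hpz : ((p : ℕ) : ZMod 2) = 1 := by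
      rw [← ZMod.natCast_mod, Nat.odd_iff.mp hodd, Nat.cast_one]
    have hsum1 : ((∑ i ∈ range r, (p:ℤ) ^ i : ℤ) : ZMod 2) = 1 := by
      push_cast
      rw [Finset.sum_congr rfl (fun i _ => by rw [hpz, one_pow])]
      rw [Finset.sum_const, card_range, nsmul_eq_mul, mul_one, ← ZMod.natCast_mod,
        Nat.odd_iff.mp ho, Nat.cast_one]
    have hoddsum : ¬ (2 : ℤ) ∣ (∑ i ∈ range r, (p:ℤ) ^ i) := by
      intro h2
      have := (ZMod.intCast_zmod_eq_zero_iff_dvd _ 2).mpr h2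
      rw [hsum1] at this
      exact one_ne_zero this
    have hnat : (∑ i ∈ range r, (p:ℤ) ^ i).natAbs ∣ 2 ^ m := by
      have h1 := Int.natAbs_dvd_natAbs.mpr hdvd
      have h2 : ((2:ℤ) ^ m).natAbs = 2 ^ m := by
        rw [Int.natAbs_pow]; rfl
      rwa [h2] at h1
    obtain ⟨i, hi, heq⟩ := (Nat.dvd_prime_pow Nat.prime_two).mp hnat
    have hi0 : i = 0 := by
      by_contra hi0
      apply hoddsum
      have h2i : (2:ℤ) ∣ ((2:ℕ)^i : ℤ) := by
        exact_mod_cast Int.natCast_dvd_natCast.mpr (dvd_pow_self 2 hi0)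
      rcases Int.natAbs_eq (∑ i ∈ range r, (p:ℤ) ^ i) with hs | hs
      · rw [hs, heq]; exact_mod_cast h2i
      · rw [hs, heq]; exact Dvd.dvd.neg_right (by exact_mod_cast h2i)
    have habs : (∑ i ∈ range r, (p:ℤ) ^ i).natAbs = 1 := by rw [heq, hi0, pow_zero]
    have hterm : (p:ℤ) ≤ ∑ i ∈ range r, (p:ℤ) ^ i := by
      have h1 : (p:ℤ) ^ 1 ≤ ∑ i ∈ range r, (p:ℤ) ^ i := by
        apply Finset.single_le_sum (f := fun i => (p:ℤ) ^ i)
        · intro i _; positivity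
        · exact Finset.mem_range.mpr (by omega)
      simpa using h1
    have h3 : (3:ℤ) ≤ ∑ i ∈ range r, (p:ℤ) ^ i :=
      le_trans (by exact_mod_cast hp3) hterm
    rcases Int.natAbs_eq (∑ i ∈ range r, (p:ℤ) ^ i) with hs | hs <;> rw [habs] at hs <;> omega

section fieldcase
variable (S : Type) [Field S] [Finite S]

theorem good_units_of_finite_field (hodd : Odd (ringChar S))
    (h2 : ∃ e, Nat.card Sˣ = 2 ^ e) : Good Sˣ := by
  classical
  cases nonempty_fintype S
  obtain ⟨m, hm⟩ := h2
  have hm' : Nat.card S - 1 = 2 ^ m := by rw [← Nat.card_units, hm]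
  have hq : Nat.card S = 2 ^ m + 1 := by
    have : 1 ≤ Nat.card S := Nat.one_le_iff_ne_zero.mpr Nat.card_pos.ne'
    omega
  -- S is a finite field: card = p ^ r with p = ringChar S prime
  set p := ringChar S with hpdef
  haveI : CharP S p := ringChar.charP S
  obtain ⟨r, hpp, hcard⟩ := FiniteField.card S p
  have hq' : p ^ (r : ℕ) = 2 ^ m + 1 := by
    rw [← hcard, ← Nat.card_eq_fintype_card, hq]
  have hr1 : 1 ≤ (r : ℕ) := r.one_le
  rcases odd_prime_pow_eq_two_pow_add_one hpp hodd hr1 hq' with ⟨hre, hm1⟩ | ⟨hp3, hr2, hm3⟩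
  · -- Fermat prime case : t = 0, k = 1
    have hprime : (2 ^ m + 1).Prime := by
      rw [← hq', hre, pow_one]; exact hpp
    refine ⟨0, 1, fun _ => m, fun _ => 1, fun i => ⟨hm1, hprime⟩, ?_⟩
    have hcyc : IsCyclic Sˣ := inferInstance
    have e0 : Sˣ ≃* Multiplicative (ZMod (2 ^ m)) :=
      mulEquivOfCyclicCardEq (by rw [hm, Nat.card_eq_fintype_card, Fintype.card_multiplicative,
        ZMod.card])
    refine ⟨e0.trans ?_⟩
    exact MulEquiv.uniqueProd.symm.trans (MulEquiv.prodCongr (MulEquiv.refl _)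
      ((MulEquiv.piUnique _).symm.trans ((MulEquiv.piUnique
        (fun _ : Fin 1 => Fin 1 → Multiplicative (ZMod (2 ^ m)))).symm)))
  · -- q = 9 case : t = 1, k = 0
    refine ⟨1, 0, Fin.elim0, Fin.elim0, fun i => i.elim0, ?_⟩
    have e0 : Sˣ ≃* Multiplicative (ZMod 8) :=
      mulEquivOfCyclicCardEq (by
        rw [hm, hm3, Nat.card_eq_fintype_card, Fintype.card_multiplicative, ZMod.card]
        norm_num)
    refine ⟨e0.trans ?_⟩
    exact MulEquiv.prodUnique.symm.trans (MulEquiv.prodCongr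
      ((MulEquiv.piUnique (fun _ : Fin 1 => Multiplicative (ZMod 8))).symm) (MulEquiv.refl _))
end fieldcase
section idem
variable {S : Type} [Ring S]

theorem idem_key {e : S} (hc : ∀ x, e * x = x * e) (hid : e * e = e) (a c : S) :
    e * (a * c) = (e * a) * (e * c) := by
  calc e * (a * c) = (e * e) * (a * c) := by rw [hid]
    _ = e * (e * (a * c)) := by rw [mul_assoc]
    _ = e * ((e * a) * c) := by rw [← mul_assoc e a c]
    _ = e * ((a * e) * c) := by rw [hc a]
    _ = e * (a * (e * c)) := by rw [mul_assoc a e c]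
    _ = (e * a) * (e * c) := by rw [← mul_assoc]

/-- congruence x ~ y iff e*x = e*y, for a central idempotent e -/
def idemCon (e : S) (hc : ∀ x, e * x = x * e) (hid : e * e = e) : RingCon S where
  r x y := e * x = e * y
  iseqv := ⟨fun _ => rfl, Eq.symm, Eq.trans⟩
  add' {a b c d} h1 h2 := by
    have h1' : e * a = e * b := h1
    have h2' : e * c = e * d := h2
    show e * (a + c) = e * (b + d)
    rw [mul_add, mul_add, h1', h2']
  mul' {a b c d} h1 h2 := by
    have h1' : e * a = e * b := h1
    have h2' : e * c = e * d := h2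
    show e * (a * c) = e * (b * d)
    rw [idem_key hc hid, idem_key hc hid, h1', h2']

theorem idemCon_eq {e : S} {hc hid} {x y : S} :
    (x : (idemCon e hc hid).Quotient) = y ↔ e * x = e * y := (idemCon e hc hid).eq

theorem idem_central (hsq : ∀ x : S, x * x = 0 → x = 0) (e : S) (hee : e * e = e) :
    ∀ x, e * x = x * e := by
  have h0 : (1 - e) * e = 0 := by rw [sub_mul, one_mul, hee, sub_self]
  have h0' : e * (1 - e) = 0 := by rw [mul_sub, mul_one, hee, sub_self]
  intro x
  have k1 : e * x - e * x * e = 0 := by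
    apply hsq
    have expand : (e * x - e * x * e) * (e * x - e * x * e)
        = e * x * ((1 - e) * e) * (x * (1 - e)) := by noncomm_ring
    rw [expand, h0, mul_zero, zero_mul]
  have k2 : x * e - e * x * e = 0 := by
    apply hsq
    have expand : (x * e - e * x * e) * (x * e - e * x * e)
        = (1 - e) * x * (e * (1 - e)) * (x * e) := by noncomm_ring
    rw [expand, h0', mul_zero, zero_mul]
  have a1 := sub_eq_zero.mp k1
  have a2 := sub_eq_zero.mp k2
  rw [a1, a2]
end idem

section mainind

theorem sq_zero_pow {S : Type} [Ring S] [Nontrivial S] (hsq : ∀ x : S, x * x = 0 → x = 0) :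
    ∀ n (x : S), x ^ n = 0 → x = 0 := by
  intro n
  induction n using Nat.strong_induction_on with
  | _ n IH =>
    intro x hx
    match n, hx with
    | 0, hx => exact absurd (by rw [pow_zero] at hx; exact hx) one_ne_zero
    | 1, hx => rw [pow_one] at hx; exact hx
    | (k+2), hx =>
      have hk : (x ^ ((k+3)/2)) * (x ^ ((k+3)/2)) = 0 := by
        rw [← pow_add]
        have h1 : k + 2 ≤ (k+3)/2 + (k+3)/2 := by omega
        obtain ⟨j, hj⟩ := Nat.exists_eq_add_of_le h1
        rw [hj, pow_add, hx, zero_mul]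
      exact IH ((k+3)/2) (by omega) x (hsq _ hk)

theorem odd_of_dvd_odd {d c : ℕ} (h : d ∣ c) (hc : Odd c) : Odd d := by
  rcases Nat.even_or_odd d with he | ho
  · exfalso
    have h2 : 2 ∣ d := he.two_dvd
    have := h2.trans h
    rw [Nat.odd_iff] at hc
    omega
  · exact ho

theorem units_good : ∀ (n : ℕ) (S : Type) [Ring S] [Finite S], Nat.card S = n →
    (∀ x : S, x * x = 0 → x = 0) → Odd (ringChar S) →
    (∃ e, Nat.card Sˣ = 2 ^ e) → Good Sˣ := by
  intro n
  induction n using Nat.strong_induction_on with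
  | _ n IH =>
    intro S _ _ hn hsq hodd h2
    classical
    rcases subsingleton_or_nontrivial S with hss | hnt
    · haveI : Unique Sˣ := ⟨⟨1⟩, fun u => Units.ext (Subsingleton.elim _ _)⟩
      haveI : Unique (TargetG 0 0 Fin.elim0 Fin.elim0) :=
        ⟨⟨(fun i => i.elim0, fun i => i.elim0)⟩,
          fun x => by refine Prod.ext ?_ ?_ <;> funext i <;> exact i.elim0⟩
      exact ⟨0, 0, Fin.elim0, Fin.elim0, fun i => i.elim0, ⟨MulEquiv.ofUnique⟩⟩
    by_cases hex : ∃ e : S, e * e = e ∧ e ≠ 0 ∧ e ≠ 1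
    · -- split along a nontrivial idempotent
      obtain ⟨e, hee, he0, he1⟩ := hex
      have hc : ∀ x, e * x = x * e := idem_central hsq e hee
      have hee' : (1 - e) * (1 - e) = (1 - e) := by
        rw [sub_mul, one_mul, mul_sub, mul_one, hee, sub_self, sub_zero]
      have hc' : ∀ x, (1 - e) * x = x * (1 - e) := fun x => by
        rw [sub_mul, one_mul, mul_sub, mul_one, hc x]
      set c₁ := idemCon e hc hee with hc₁
      set c₂ := idemCon (1 - e) hc' hee' with hc₂
      have h0 : e * (1 - e) = 0 := by rw [mul_sub, mul_one, hee, sub_self]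
      have h0' : (1 - e) * e = 0 := by rw [sub_mul, one_mul, hee, sub_self]
      let f : S →+* c₁.Quotient × c₂.Quotient := (c₁.mk').prod (c₂.mk')
      have hfc : ∀ x : S, f x = ((x : c₁.Quotient), (x : c₂.Quotient)) := fun x => rfl
      have hinj : Function.Injective f := by
        intro x y hxy
        rw [hfc, hfc, Prod.mk.injEq] at hxy
        have h1 : e * x = e * y := idemCon_eq.mp hxy.1
        have h2' : (1 - e) * x = (1 - e) * y := idemCon_eq.mp hxy.2
        have hh : e * x + (1 - e) * x = e * y + (1 - e) * y := by rw [h1, h2']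
        calc x = e * x + (1 - e) * x := by noncomm_ring
          _ = e * y + (1 - e) * y := hh
          _ = y := by noncomm_ring
      have hsurj : Function.Surjective f := by
        rintro ⟨a, b⟩
        obtain ⟨a', rfl⟩ := Quotient.exists_rep a
        obtain ⟨b', rfl⟩ := Quotient.exists_rep b
        refine ⟨e * a' + (1 - e) * b', ?_⟩
        rw [hfc]; refine Prod.ext_iff.mpr ?_
        constructor
        · show _ = (a' : c₁.Quotient)
          rw [idemCon_eq, mul_add, ← mul_assoc, hee, ← mul_assoc, h0, zero_mul, add_zero]
        · show _ = (b' : c₂.Quotient)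
          rw [idemCon_eq, mul_add, ← mul_assoc, h0', zero_mul, zero_add, ← mul_assoc, hee']
      let F : S ≃+* c₁.Quotient × c₂.Quotient := RingEquiv.ofBijective f ⟨hinj, hsurj⟩
      haveI hfin1 : Finite c₁.Quotient := Finite.of_surjective _ (Quotient.exists_rep ·)
      haveI hfin2 : Finite c₂.Quotient := Finite.of_surjective _ (Quotient.exists_rep ·)
      have hcards : Nat.card S = Nat.card c₁.Quotient * Nat.card c₂.Quotient := by
        rw [← Nat.card_prod]; exact Nat.card_congr F.toEquiv
      haveI hnt1 : Nontrivial c₁.Quotient := by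
        refine ⟨((0:S) : c₁.Quotient), ((1:S) : c₁.Quotient), ?_⟩
        rw [Ne, idemCon_eq, mul_zero, mul_one]
        exact fun h => he0 h.symm
      haveI hnt2 : Nontrivial c₂.Quotient := by
        refine ⟨((0:S) : c₂.Quotient), ((1:S) : c₂.Quotient), ?_⟩
        rw [Ne, idemCon_eq, mul_zero, mul_one]
        intro h
        exact he1 (sub_eq_zero.mp h.symm).symm
      have hlt1 : Nat.card c₁.Quotient < n := by
        have h1 : 1 < Nat.card c₁.Quotient := Finite.one_lt_card
        have h2' : 1 < Nat.card c₂.Quotient := Finite.one_lt_card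
        rw [← hn]; nlinarith [hcards]
      have hlt2 : Nat.card c₂.Quotient < n := by
        have h1 : 1 < Nat.card c₁.Quotient := Finite.one_lt_card
        have h2' : 1 < Nat.card c₂.Quotient := Finite.one_lt_card
        rw [← hn]; nlinarith [hcards]
      have hsq1 : ∀ x : c₁.Quotient, x * x = 0 → x = 0 := by
        intro q hq
        obtain ⟨x, rfl⟩ := Quotient.exists_rep q
        have hxx : ((x * x : S) : c₁.Quotient) = ((0:S) : c₁.Quotient) := hq
        rw [idemCon_eq, mul_zero, idem_key hc hee] at hxx
        have hz := hsq _ hxx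
        show (x : c₁.Quotient) = ((0:S) : c₁.Quotient)
        rw [idemCon_eq, mul_zero, hz]
      have hsq2 : ∀ x : c₂.Quotient, x * x = 0 → x = 0 := by
        intro q hq
        obtain ⟨x, rfl⟩ := Quotient.exists_rep q
        have hxx : ((x * x : S) : c₂.Quotient) = ((0:S) : c₂.Quotient) := hq
        rw [idemCon_eq, mul_zero, idem_key hc' hee'] at hxx
        have hz := hsq _ hxx
        show (x : c₂.Quotient) = ((0:S) : c₂.Quotient)
        rw [idemCon_eq, mul_zero, hz]
      haveI : CharP S (ringChar S) := ringChar.charP S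
      have hchar1 : Odd (ringChar c₁.Quotient) := by
        refine odd_of_dvd_odd ((ringChar.spec _ _).mp ?_) hodd
        have hmap : ((ringChar S : ℕ) : c₁.Quotient) = c₁.mk' ((ringChar S : ℕ) : S) := by
          rw [map_natCast]
        rw [hmap, CharP.cast_eq_zero S (ringChar S), map_zero]
      have hchar2 : Odd (ringChar c₂.Quotient) := by
        refine odd_of_dvd_odd ((ringChar.spec _ _).mp ?_) hodd
        have hmap : ((ringChar S : ℕ) : c₂.Quotient) = c₂.mk' ((ringChar S : ℕ) : S) := by
          rw [map_natCast]
        rw [hmap, CharP.cast_eq_zero S (ringChar S), map_zero]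
      -- units
      have eU : Sˣ ≃* c₁.Quotientˣ × c₂.Quotientˣ :=
        (Units.mapEquiv F.toMulEquiv).trans MulEquiv.prodUnits
      obtain ⟨ee, hee2⟩ := h2
      have hucard : Nat.card c₁.Quotientˣ * Nat.card c₂.Quotientˣ = 2 ^ ee := by
        rw [← Nat.card_prod, ← Nat.card_congr eU.toEquiv, hee2]
      have hu1 : ∃ e1, Nat.card c₁.Quotientˣ = 2 ^ e1 := by
        have : Nat.card c₁.Quotientˣ ∣ 2 ^ ee := Dvd.intro _ hucard
        obtain ⟨i, _, hi⟩ := (Nat.dvd_prime_pow Nat.prime_two).mp this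
        exact ⟨i, hi⟩
      have hu2 : ∃ e2, Nat.card c₂.Quotientˣ = 2 ^ e2 := by
        have : Nat.card c₂.Quotientˣ ∣ 2 ^ ee := Dvd.intro_left _ hucard
        obtain ⟨i, _, hi⟩ := (Nat.dvd_prime_pow Nat.prime_two).mp this
        exact ⟨i, hi⟩
      have g1 := IH _ hlt1 c₁.Quotient rfl hsq1 hchar1 hu1
      have g2 := IH _ hlt2 c₂.Quotient rfl hsq2 hchar2 hu2
      exact (g1.prod g2).of_mulEquiv eU
    · -- no nontrivial idempotent : division ring, hence finite field
      push_neg at hex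
      have hunit : ∀ x : S, x ≠ 0 → ∃ N, 0 < N ∧ x ^ N = 1 := by
        intro x hx
        obtain ⟨a, b, hab, hpow⟩ := Finite.exists_ne_map_eq_of_infinite (fun n : ℕ => x ^ n)
        wlog hlt : a < b generalizing a b
        · exact this b a hab.symm hpow.symm (by omega)
        set d := b - a with hd
        have hd1 : 1 ≤ d := by omega
        have hb : b = a + d := by omega
        have honestep : ∀ i, a ≤ i → x ^ (i + d) = x ^ i := by
          intro i hi
          obtain ⟨t, rfl⟩ := Nat.exists_eq_add_of_le hi
          rw [add_right_comm, pow_add, ← hb, ← hpow, ← pow_add]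
        have hshift : ∀ j i, a ≤ i → x ^ (i + j * d) = x ^ i := by
          intro j
          induction j with
          | zero => intro i _; rw [Nat.zero_mul, add_zero]
          | succ k ihk =>
            intro i hi
            have : i + (k+1) * d = (i + k * d) + d := by ring
            rw [this, honestep _ (by omega), ihk i hi]
        set N := (a + 1) * d with hN
        have hNa : a ≤ N := by
          calc a ≤ a + 1 := by omega
            _ = (a+1) * 1 := by ring
            _ ≤ (a+1) * d := Nat.mul_le_mul_left _ hd1
        have hNpos : 0 < N := by positivity
        have hidem : x ^ N * x ^ N = x ^ N := by
          rw [← pow_add]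
          exact hshift (a+1) N hNa
        have hne : x ^ N ≠ 0 := fun h => hx (sq_zero_pow hsq N x h)
        exact ⟨N, hNpos, hex (x ^ N) hidem hne⟩
      haveI : NoZeroDivisors S := ⟨fun {x y} hxy => by
        by_cases hx : x = 0
        · exact Or.inl hx
        · right
          obtain ⟨N, hN, hxN⟩ := hunit x hx
          have hstep : x ^ N = x ^ (N - 1) * x := by
            rw [← pow_succ]; congr 1; omega
          calc y = 1 * y := (one_mul y).symm
            _ = x ^ N * y := by rw [hxN]
            _ = x ^ (N-1) * (x * y) := by rw [hstep, mul_assoc]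
            _ = 0 := by rw [hxy, mul_zero]⟩
      haveI : IsDomain S := NoZeroDivisors.to_isDomain S
      letI : Field S := (Finite.isDomain_to_isField S).toField
      exact good_units_of_finite_field S hodd h2
end mainind

section forward
variable {R : Type} [Ring R]

theorem one_add_sq_zero_pow {a : R} (haa : a * a = 0) : ∀ n : ℕ, (1 + a) ^ n = 1 + n • a := by
  intro n
  induction n with
  | zero => simp
  | succ k ih =>
    rw [pow_succ, ih]
    have : (1 + k • a) * (1 + a) = 1 + a + k • a + (k • a) * a := by noncomm_ring
    rw [this, smul_mul_assoc, haa, smul_zero, add_zero, succ_nsmul]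
    abel

theorem forward_good (G : Type) [Group G] [Fintype G] (hG : ∃ e : ℕ, Fintype.card G = 2 ^ e)
    (c : ℕ) (hodd : Odd c) [hcp : CharP R c] (iso : Rˣ ≃* G) : Good G := by
  classical
  obtain ⟨eg, heg⟩ := hG
  haveI : Finite Rˣ := Finite.of_equiv G iso.toEquiv.symm
  have hcardu : Nat.card Rˣ = 2 ^ eg := by
    rw [Nat.card_congr iso.toEquiv, Nat.card_eq_fintype_card, heg]
  have hc0 : c ≠ 0 := by rintro rfl; exact (by decide : ¬ Odd 0) hodd
  set U : Set R := Set.range (fun u : Rˣ => (u : R)) with hU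
  set A : AddSubgroup R := AddSubgroup.closure U with hA
  have hUA : U ⊆ A := AddSubgroup.subset_closure
  have hmul : ∀ x ∈ A, ∀ y ∈ A, x * y ∈ A := by
    intro x hx
    induction hx using AddSubgroup.closure_induction with
    | mem u hu =>
      intro y hy
      induction hy using AddSubgroup.closure_induction with
      | mem v hv =>
        obtain ⟨uu, rfl⟩ := hu
        obtain ⟨vv, rfl⟩ := hv
        exact hUA ⟨uu * vv, rfl⟩
      | zero => rw [mul_zero]; exact A.zero_mem
      | add a b _ _ ha hb => rw [mul_add]; exact A.add_mem ha hb
      | neg a _ ha => rw [mul_neg]; exact A.neg_mem ha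
    | zero => intro y hy; rw [zero_mul]; exact A.zero_mem
    | add a b _ _ ha hb => intro y hy; rw [add_mul]; exact A.add_mem (ha y hy) (hb y hy)
    | neg a _ ha => intro y hy; rw [neg_mul]; exact A.neg_mem (ha y hy)
  let T : Subring R :=
    { carrier := A
      zero_mem' := A.zero_mem
      add_mem' := fun hx hy => A.add_mem hx hy
      neg_mem' := fun hx => A.neg_mem hx
      one_mem' := hUA ⟨1, rfl⟩
      mul_mem' := fun hx hy => hmul _ hx _ hy }
  -- T is finite
  haveI hfgA : AddGroup.FG ↥A := by
    rw [AddGroup.fg_iff_addSubgroup_fg]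
    exact ⟨(Set.finite_range _).toFinset, by rw [Set.Finite.coe_toFinset]⟩
  have htor : AddMonoid.IsTorsion ↥A := by
    intro x
    rw [isOfFinAddOrder_iff_nsmul_eq_zero]
    refine ⟨c, by omega, ?_⟩
    have : ((c • x : ↥A) : R) = c • (x : R) := rfl
    apply Subtype.ext
    rw [this, nsmul_eq_mul, CharP.cast_eq_zero R c, zero_mul]
    rfl
  haveI hfinA : Finite ↥A := AddCommGroup.finite_of_fg_torsion ↥A htor
  haveI hfinT : Finite T := hfinA
  -- units of T ≃ units of R
  let φ : Tˣ →* Rˣ := Units.map (T.subtype : T →+* R).toMonoidHom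
  have hφinj : Function.Injective φ := by
    intro u v h
    have h1 : ((u : T) : R) = ((v : T) : R) := congrArg Units.val h
    exact Units.ext (Subtype.ext h1)
  have hφsurj : Function.Surjective φ := by
    intro u
    have hu : (u : R) ∈ A := hUA ⟨u, rfl⟩
    have hu' : ((u⁻¹ : Rˣ) : R) ∈ A := hUA ⟨u⁻¹, rfl⟩
    refine ⟨⟨⟨(u : R), hu⟩, ⟨((u⁻¹ : Rˣ) : R), hu'⟩, ?_, ?_⟩, ?_⟩
    · exact Subtype.ext (by simp)
    · exact Subtype.ext (by simp)
    · exact Units.ext rfl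
  let Φ : Tˣ ≃* Rˣ := MulEquiv.ofBijective φ ⟨hφinj, hφsurj⟩
  -- hypotheses for units_good
  have hsqT : ∀ x : T, x * x = 0 → x = 0 := by
    intro x hx
    set a : R := (x : R) with ha
    have haa : a * a = 0 := by
      have := congrArg Subtype.val hx
      exact this
    have hv1 : (1 + a) * (1 - a) = 1 := by
      have expand : (1 + a) * (1 - a) = 1 - a * a := by noncomm_ring
      rw [expand, haa, sub_zero]
    have hv2 : (1 - a) * (1 + a) = 1 := by
      have expand : (1 - a) * (1 + a) = 1 - a * a := by noncomm_ring
      rw [expand, haa, sub_zero]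
    set v : Rˣ := ⟨1 + a, 1 - a, hv1, hv2⟩ with hv
    have hvp : v ^ (2 ^ eg) = 1 := by rw [← hcardu]; exact pow_card_eq_one'
    have hvpR : (1 + a) ^ (2 ^ eg) = 1 := by
      simpa using congrArg Units.val hvp
    rw [one_add_sq_zero_pow haa] at hvpR
    have hsm : (2 ^ eg) • a = 0 := by
      have := congrArg (fun z => z - 1) hvpR
      simpa using this
    have hcm : c • a = 0 := by rw [nsmul_eq_mul, CharP.cast_eq_zero R c, zero_mul]
    -- Bezout
    have hcop : Nat.Coprime (2 ^ eg) c := Nat.Coprime.pow_left _ (Nat.coprime_two_left.mpr hodd)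
    have hgcd : Int.gcd (2 ^ eg : ℤ) (c : ℤ) = 1 := by
      have : Int.gcd ((2 ^ eg : ℕ) : ℤ) ((c : ℕ) : ℤ) = Nat.gcd (2 ^ eg) c := by
        rw [Int.gcd_natCast_natCast]
      rw [show ((2:ℤ) ^ eg) = ((2 ^ eg : ℕ) : ℤ) by push_cast; ring, this]
      exact hcop
    have hbez := Int.gcd_eq_gcd_ab (2 ^ eg : ℤ) (c : ℤ)
    rw [hgcd] at hbez
    have ha0 : a = 0 := by
      have h1 : a = ((1 : ℤ) : ℤ) • a := by simp
      calc a = (1 : ℤ) • a := by simp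
        _ = ((2 ^ eg : ℤ) * Int.gcdA (2 ^ eg : ℤ) (c : ℤ)
              + (c : ℤ) * Int.gcdB (2 ^ eg : ℤ) (c : ℤ)) • a := by
            rw [← hbez]; norm_num
        _ = (Int.gcdA (2 ^ eg : ℤ) (c : ℤ) * (2 ^ eg : ℤ)) • a
              + (Int.gcdB (2 ^ eg : ℤ) (c : ℤ) * (c : ℤ)) • a := by
            rw [add_smul, mul_comm ((2:ℤ) ^ eg), mul_comm ((c:ℕ) : ℤ)]
        _ = Int.gcdA (2 ^ eg : ℤ) (c : ℤ) • ((2 ^ eg : ℤ) • a)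
              + Int.gcdB (2 ^ eg : ℤ) (c : ℤ) • ((c : ℤ) • a) := by
            rw [mul_smul, mul_smul]
        _ = 0 := by
            have e1 : ((2 ^ eg : ℤ)) • a = 0 := by
              rw [show ((2:ℤ) ^ eg) = ((2 ^ eg : ℕ) : ℤ) by push_cast; ring,
                natCast_zsmul, hsm]
            have e2 : ((c : ℕ) : ℤ) • a = 0 := by rw [natCast_zsmul, hcm]
            rw [e1, e2, smul_zero, smul_zero, add_zero]
    exact Subtype.ext ha0
  have hoddT : Odd (ringChar T) := by
    refine odd_of_dvd_odd ((ringChar.spec _ _).mp ?_) hodd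
    apply Subtype.ext
    have : ((c : T) : R) = (c : R) := map_natCast (T.subtype : T →+* R) c
    rw [this, CharP.cast_eq_zero R c]
    rfl
  have h2T : ∃ e, Nat.card Tˣ = 2 ^ e := by
    refine ⟨eg, ?_⟩
    rw [Nat.card_congr Φ.toEquiv, hcardu]
  have := units_good (Nat.card T) T rfl hsqT hoddT h2T
  exact this.of_mulEquiv (iso.symm.trans Φ.symm)

end forward

section reverse

def myPiUnits {ι : Type} (M : ι → Type) [∀ i, Monoid (M i)] :
    (∀ i, M i)ˣ ≃* ∀ i, (M i)ˣ where
  toFun u i := ⟨u.val i, u.inv i, congrFun u.val_inv i, congrFun u.inv_val i⟩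
  invFun f := ⟨fun i => (f i : M i), fun i => ((f i)⁻¹ : (M i)ˣ),
    funext fun i => (f i).mul_inv, funext fun i => (f i).inv_mul⟩
  left_inv u := Units.ext rfl
  right_inv f := funext fun i => Units.ext rfl
  map_mul' u v := funext fun i => Units.ext rfl

theorem reverse_ring (G : Type) [Group G] (t k : ℕ) (nn s : Fin k → ℕ)
    (hc : ∀ i, 0 < nn i ∧ (2 ^ nn i + 1).Prime)
    (iso : G ≃* TargetG t k nn s) :
    ∃ (R : Type) (_ : Ring R) (c : ℕ), Odd c ∧ CharP R c ∧ Nonempty (Rˣ ≃* G) := by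
  classical
  haveI h3 : Fact (Nat.Prime 3) := ⟨by norm_num⟩
  haveI hColl : ∀ i : Fin k, Fact (Nat.Prime (2 ^ nn i + 1)) := fun i => ⟨(hc i).2⟩
  set R : Type := (Fin t → GaloisField 3 2) ×
    ((i : Fin k) → Fin (s i) → ZMod (2 ^ nn i + 1)) with hR
  refine ⟨R, inferInstance, ringChar R, ?_, ringChar.charP R, ?_⟩
  · -- characteristic is odd
    set N : ℕ := 3 * ∏ i : Fin k, (2 ^ nn i + 1) with hN
    have hNodd : Odd N := by
      refine Odd.mul (by decide) ?_
      refine Finset.prod_induction _ Odd (fun a b => Odd.mul) odd_one ?_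
      intro i _
      exact (Nat.even_pow.mpr ⟨even_two, by have := (hc i).1; omega⟩).add_one
    have hcast : (N : R) = 0 := by
      refine Prod.ext ?_ ?_
      · show ((N : R).1) = 0
        have : (N : R).1 = (N : Fin t → GaloisField 3 2) := rfl
        rw [this]
        funext j
        show ((N : ℕ) : GaloisField 3 2) = 0
        exact (CharP.cast_eq_zero_iff _ 3 N).mpr ⟨_, rfl⟩
      · show ((N : R).2) = 0
        have : (N : R).2 = (N : (i : Fin k) → Fin (s i) → ZMod (2 ^ nn i + 1)) := rfl
        rw [this]
        funext i j
        show ((N : ℕ) : ZMod (2 ^ nn i + 1)) = 0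
        refine (CharP.cast_eq_zero_iff _ (2 ^ nn i + 1) N).mpr ?_
        exact Dvd.dvd.mul_left (Finset.dvd_prod_of_mem _ (Finset.mem_univ i)) 3
    exact odd_of_dvd_odd ((ringChar.spec _ _).mp hcast) hNodd
  · -- units
    have eGF : (GaloisField 3 2)ˣ ≃* Multiplicative (ZMod 8) := by
      haveI : Finite (GaloisField 3 2)ˣ := inferInstance
      refine mulEquivOfCyclicCardEq ?_
      rw [Nat.card_units, GaloisField.card 3 2 (by norm_num),
        Nat.card_eq_fintype_card, Fintype.card_multiplicative, ZMod.card]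
      norm_num
    have eZ : ∀ i : Fin k, (ZMod (2 ^ nn i + 1))ˣ ≃* Multiplicative (ZMod (2 ^ nn i)) := by
      intro i
      refine mulEquivOfCyclicCardEq ?_
      rw [Nat.card_units, Nat.card_zmod, Nat.card_eq_fintype_card,
        Fintype.card_multiplicative, ZMod.card]
      exact Nat.add_sub_cancel _ _
    have e1 : Rˣ ≃* ((Fin t → GaloisField 3 2)ˣ ×
        ((i : Fin k) → Fin (s i) → ZMod (2 ^ nn i + 1))ˣ) := MulEquiv.prodUnits
    have e2 : (Fin t → GaloisField 3 2)ˣ ≃* (Fin t → Multiplicative (ZMod 8)) :=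
      (myPiUnits _).trans (MulEquiv.piCongrRight fun _ => eGF)
    have e3 : ((i : Fin k) → Fin (s i) → ZMod (2 ^ nn i + 1))ˣ ≃*
        ((i : Fin k) → Fin (s i) → Multiplicative (ZMod (2 ^ nn i))) :=
      (myPiUnits _).trans (MulEquiv.piCongrRight fun i =>
        (myPiUnits _).trans (MulEquiv.piCongrRight fun _ => eZ i))
    exact ⟨(e1.trans (MulEquiv.prodCongr e2 e3)).trans iso.symm⟩

end reverse

/-- A finite 2-group `G` is the group of units of a ring of odd characteristic iff
`G ≅ C₈ᵗ × ∏ᵢ C_{2^{nᵢ}}^{sᵢ}` where each `2^{nᵢ} + 1` is a Fermat prime. -/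
theorem fuchs_two_group_odd_char (G : Type) [Group G] [Fintype G]
    (hG : ∃ e : ℕ, Fintype.card G = 2 ^ e) :
    (∃ (R : Type) (_ : Ring R) (c : ℕ), Odd c ∧ CharP R c ∧ Nonempty (Rˣ ≃* G)) ↔
    (∃ (t k : ℕ) (nn s : Fin k → ℕ), (∀ i, 0 < nn i ∧ (2 ^ nn i + 1).Prime) ∧
      Nonempty (G ≃* (Fin t → Multiplicative (ZMod 8)) ×
        ((i : Fin k) → Fin (s i) → Multiplicative (ZMod (2 ^ nn i))))) := by
  constructor
  · rintro ⟨R, _, c, hodd, hcp, ⟨iso⟩⟩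
    haveI := hcp
    exact forward_good G hG c hodd iso
  · rintro ⟨t, k, nn, s, hc, ⟨iso⟩⟩
    exact reverse_ring G t k nn s hc iso
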